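/- Let r > 0 be real, q a natural number, and 0 < Λ_R ≤ Λ. Then the improper integral ∫_{Λ}^{∞} x^(-r-1) · (Real.log(x/Λ_R))^q dx converges and equals (q! / r^(q+1)) · Λ^(-r) · ∑_{j=0}^{q} (r · Real.log(Λ/Λ_R))^j / j!. -/

import Mathlib

open MeasureTheory Filter Topology

/-- Improper scale integral for the irrelevant case: for `r > 0` and `0 < Λ_R ≤ Λ`,
the integral `∫_{Λ}^{∞} x^(-r-1) (log (x/Λ_R))^q dx` converges and equals
`(q!/r^(q+1)) · Λ^(-r) · ∑_{j=0}^q (r log(Λ/Λ_R))^j / j!`. -/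
theorem intlog_improper_integral_irrelevant (r : ℝ) (hr : 0 < r) (q : ℕ)
    (ΛR Λ : ℝ) (hΛR : 0 < ΛR) (hΛ : ΛR ≤ Λ) :
    IntegrableOn (fun x : ℝ => x ^ (-r - 1) * (Real.log (x / ΛR)) ^ q) (Set.Ioi Λ) ∧
    ∫ x in Set.Ioi Λ, x ^ (-r - 1) * (Real.log (x / ΛR)) ^ q =
      ((Nat.factorial q : ℝ) / r ^ (q + 1)) * Λ ^ (-r) *
        ∑ j ∈ Finset.range (q + 1),
          (r * Real.log (Λ / ΛR)) ^ j / (Nat.factorial j) := by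
  have hΛ0 : 0 < Λ := lt_of_lt_of_le hΛR hΛ
  set c : ℝ := (Nat.factorial q : ℝ) / r ^ (q + 1) with hc
  set G : ℝ → ℝ := fun x => -c * (x ^ (-r) *
      ∑ j ∈ Finset.range (q + 1), (r * Real.log (x / ΛR)) ^ j / (Nat.factorial j)) with hGdef
  -- derivative
  have hG : ∀ x : ℝ, 0 < x →
      HasDerivAt G (x ^ (-r - 1) * (Real.log (x / ΛR)) ^ q) x := by
    intro x hx
    have hL : HasDerivAt (fun y : ℝ => Real.log (y / ΛR)) x⁻¹ x := by
      have h1 : HasDerivAt (fun y : ℝ => y / ΛR) (1 / ΛR) x := by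
        simpa using (hasDerivAt_id x).div_const ΛR
      have := (Real.hasDerivAt_log (div_ne_zero hx.ne' hΛR.ne')).comp x h1
      refine this.congr_deriv (Eq.symm ?_)
      rw [one_div, ← mul_inv, div_mul_cancel₀ x hΛR.ne']
    have hsum : HasDerivAt
        (fun y : ℝ => ∑ j ∈ Finset.range (q + 1), (r * Real.log (y / ΛR)) ^ j / (Nat.factorial j))
        (∑ j ∈ Finset.range (q + 1),
          ((j : ℝ) * (r * Real.log (x / ΛR)) ^ (j - 1) * (r * x⁻¹)) / (Nat.factorial j)) x := by
      apply HasDerivAt.fun_sum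
      intro j _
      exact ((hL.const_mul r).pow j).div_const _
    have hrpow : HasDerivAt (fun y : ℝ => y ^ (-r)) (-r * x ^ (-r - 1)) x := by
      simpa using Real.hasDerivAt_rpow_const (p := -r) (Or.inl hx.ne')
    have hmain := (hrpow.mul hsum).const_mul (-c)
    refine hmain.congr_deriv (Eq.symm ?_)
    set L : ℝ := Real.log (x / ΛR)
    -- simplify derivative sum
    have hD : (∑ j ∈ Finset.range (q + 1),
        ((j : ℝ) * (r * L) ^ (j - 1) * (r * x⁻¹)) / (Nat.factorial j)) =
        (r * x⁻¹) * ∑ j ∈ Finset.range q, (r * L) ^ j / (Nat.factorial j) := by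
      rw [Finset.sum_range_succ', Finset.mul_sum]
      simp only [Nat.cast_zero, zero_mul, zero_div, add_zero]
      refine Finset.sum_congr rfl fun i _ => ?_
      have : ((i : ℝ) + 1) ≠ 0 := by positivity
      have hfact : (Nat.factorial (i + 1) : ℝ) = ((i : ℝ) + 1) * (Nat.factorial i : ℝ) := by
        rw [Nat.factorial_succ]; push_cast; ring
      simp only [Nat.add_sub_cancel, Nat.cast_add, Nat.cast_one, hfact]
      field_simp
    rw [hD, Finset.sum_range_succ]
    have hxr : x ^ (-r) = x ^ (-r - 1) * x := by
      rw [Real.rpow_sub hx, Real.rpow_one, div_mul_cancel₀ _ hx.ne']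
    rw [hxr, hc]
    have hfq : (Nat.factorial q : ℝ) ≠ 0 := Nat.cast_ne_zero.2 (Nat.factorial_ne_zero q)
    set A : ℝ := x ^ (-r - 1)
    set Q : ℝ := ∑ j ∈ Finset.range q, (r * L) ^ j / (Nat.factorial j)
    rw [mul_pow]
    field_simp
    ring
  -- limit at infinity
  have hlim : Tendsto G atTop (𝓝 0) := by
    have h1 : Tendsto (fun x : ℝ => x ^ (-r) *
        ∑ j ∈ Finset.range (q + 1), (r * Real.log (x / ΛR)) ^ j / (Nat.factorial j))
        atTop (𝓝 0) := by
      have heq : ∀ x : ℝ, x ^ (-r) *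
          ∑ j ∈ Finset.range (q + 1), (r * Real.log (x / ΛR)) ^ j / (Nat.factorial j) =
          ∑ j ∈ Finset.range (q + 1),
            (r ^ j / (Nat.factorial j : ℝ)) * (x ^ (-r) * (Real.log (x / ΛR)) ^ j) := by
        intro x
        rw [Finset.mul_sum]
        exact Finset.sum_congr rfl fun j _ => by rw [mul_pow]; ring
      simp only [heq]
      have : (0:ℝ) = ∑ j ∈ Finset.range (q + 1), (r ^ j / (Nat.factorial j : ℝ)) * 0 := by simp
      rw [this]
      apply tendsto_finset_sum
      intro j _
      apply Tendsto.const_mul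
      -- base limit
      have comp : Tendsto (fun x : ℝ => x / ΛR) atTop atTop :=
        tendsto_id.atTop_div_const hΛR
      have little : Tendsto (fun y : ℝ => Real.log y ^ j / y ^ r) atTop (𝓝 0) := by
        have := (isLittleO_log_rpow_rpow_atTop (j : ℝ) hr).tendsto_div_nhds_zero
        simpa [Real.rpow_natCast] using this
      have comped := little.comp comp
      have mult := comped.const_mul (ΛR ^ (-r))
      rw [mul_zero] at mult
      apply mult.congr'
      filter_upwards [eventually_gt_atTop (0:ℝ)] with x hx
      have hxr : (0:ℝ) < x ^ r := Real.rpow_pos_of_pos hx r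
      have hΛRr : (0:ℝ) < ΛR ^ r := Real.rpow_pos_of_pos hΛR r
      rw [Function.comp_apply, Real.div_rpow hx.le hΛR.le, Real.rpow_neg hΛR.le,
        Real.rpow_neg hx.le]
      field_simp
    have h2 := h1.const_mul (-c)
    rw [mul_zero] at h2
    exact h2
  have hcont : ContinuousWithinAt G (Set.Ici Λ) Λ :=
    (hG Λ hΛ0).continuousAt.continuousWithinAt
  have hderiv : ∀ x ∈ Set.Ioi Λ, HasDerivAt G (x ^ (-r - 1) * (Real.log (x / ΛR)) ^ q) x :=
    fun x hx => hG x (hΛ0.trans hx)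
  have hpos : ∀ x ∈ Set.Ioi Λ, 0 ≤ x ^ (-r - 1) * (Real.log (x / ΛR)) ^ q := by
    intro x hx
    have hx0 : 0 < x := hΛ0.trans hx
    have hlog : 0 ≤ Real.log (x / ΛR) :=
      Real.log_nonneg ((one_le_div hΛR).2 (hΛ.trans (le_of_lt hx)))
    exact mul_nonneg (Real.rpow_nonneg hx0.le _) (pow_nonneg hlog q)
  refine ⟨integrableOn_Ioi_deriv_of_nonneg hcont hderiv hpos hlim, ?_⟩
  rw [integral_Ioi_of_hasDerivAt_of_nonneg hcont hderiv hpos hlim]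
  simp only [hGdef]
  ring
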